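/- Necessity of flow balance for queue stability: if Q(t+1) = max(Q(t) - b(t), 0) + a(t) with nonnegative a, b, Q(1) = 0, and limsup_{t→∞} (1/t)·Σ_{τ=1}^{t} Q(τ) < ∞, then limsup_{t→∞} (1/t)·Σ_{τ=1}^{t}(a(τ) - b(τ)) ≤ 0. -/

import Mathlib

open Filter

/-- Necessity of flow balance for queue stability (deterministic version). -/
theorem stmt_8 (Q a b : ℕ → ℝ) (C : ℝ)
    (ha : ∀ t, 0 ≤ a t) (hb : ∀ t, 0 ≤ b t)
    (haC : ∀ t, a t ≤ C) (hbC : ∀ t, b t ≤ C)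
    (hQ1 : Q 1 = 0)
    (hrec : ∀ t, 1 ≤ t → Q (t + 1) = max (Q t - b t) 0 + a t)
    (hstab : ∃ M : ℝ, ∀ᶠ t : ℕ in Filter.atTop,
      (1 / (t : ℝ)) * ∑ τ ∈ Finset.Icc 1 t, Q τ ≤ M) :
    Filter.limsup (fun t : ℕ => (1 / (t : ℝ)) * ∑ τ ∈ Finset.Icc 1 t, (a τ - b τ))
      Filter.atTop ≤ 0 := by
  obtain ⟨M, hM⟩ := hstab
  obtain ⟨T₀, hT₀⟩ := eventually_atTop.mp hM
  have hC0 : 0 ≤ C := le_trans (ha 0) (haC 0)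
  obtain ⟨D, hD⟩ : ∃ D : ℝ, D = C + 1 := ⟨_, rfl⟩
  have hDpos : 0 < D := by rw [hD]; linarith
  -- Q is nonneg for t ≥ 1
  have hQnn : ∀ t, 1 ≤ t → 0 ≤ Q t := by
    intro t ht
    rcases Nat.exists_eq_add_of_le ht with ⟨k, rfl⟩
    cases k with
    | zero => simp [hQ1]
    | succ n =>
        have : (1 + (n+1)) = (1 + n) + 1 := by ring
        rw [this, hrec (1+n) (by omega)]
        have := ha (1+n)
        have : (0:ℝ) ≤ max (Q (1+n) - b (1+n)) 0 := le_max_right _ _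
        linarith [ha (1+n)]
  -- telescoping: partial sums of a - b bounded by Q (t+1)
  have hsum : ∀ t, 1 ≤ t → ∑ τ ∈ Finset.Icc 1 t, (a τ - b τ) ≤ Q (t + 1) := by
    intro t ht
    induction t, ht using Nat.le_induction with
    | base =>
        simp only [Finset.Icc_self, Finset.sum_singleton]
        rw [hrec 1 le_rfl, hQ1]
        have : -b 1 ≤ max (0 - b 1) 0 := by
          simp only [zero_sub]; exact le_max_left _ _
        linarith
    | succ n hn ih =>
        rw [Finset.sum_Icc_succ_top (by omega)]
        rw [hrec (n+1) (by omega)]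
        have h1 : Q (n+1) - b (n+1) ≤ max (Q (n+1) - b (n+1)) 0 := le_max_left _ _
        linarith
  -- Q decreases by at most D per step
  have hdec : ∀ t, 1 ≤ t → ∀ k : ℕ, Q t - D * k ≤ Q (t + k) := by
    intro t ht k
    induction k with
    | zero => simp
    | succ n ihn =>
        have h1 : Q (t + n) - b (t + n) ≤ Q (t + n + 1) := by
          rw [hrec (t+n) (by omega)]
          have := ha (t+n)
          have h2 : Q (t+n) - b (t+n) ≤ max (Q (t+n) - b (t+n)) 0 := le_max_left _ _
          linarith
        have hbD : b (t+n) ≤ D := by have := hbC (t+n); simp [hD]; linarith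
        have : t + (n+1) = t + n + 1 := by ring
        rw [this]
        push_cast
        push_cast at ihn
        linarith
  -- M is nonnegative
  have hM0 : 0 ≤ M := by
    have h := hT₀ (max T₀ 1) (le_max_left _ _)
    refine le_trans ?_ h
    apply mul_nonneg (by positivity)
    apply Finset.sum_nonneg
    intro i hi
    exact hQnn i (Finset.mem_Icc.mp hi).1
  -- the key: for every ε > 0, eventually Q (t+1) ≤ ε * t
  have key : ∀ ε : ℝ, 0 < ε → ∀ᶠ t : ℕ in atTop, Q (t + 1) ≤ ε * t := by
    intro ε hε
    obtain ⟨B, hB⟩ : ∃ B : ℝ, B = 2 + ε / (2 * D) := ⟨_, rfl⟩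
    obtain ⟨T₁, hT₁⟩ := exists_nat_gt (4 * D * M * B / (ε ^ 2))
    rw [eventually_atTop]
    refine ⟨max (max T₀ T₁) 1, fun t htN => ?_⟩
    have ht1 : 1 ≤ t := le_trans (le_max_right _ _) htN
    have htT₀ : T₀ ≤ t := le_trans (le_trans (le_max_left _ _) (le_max_left _ _)) htN
    have htT₁ : T₁ ≤ t := le_trans (le_trans (le_max_right _ _) (le_max_left _ _)) htN
    by_contra hcon
    push_neg at hcon
    -- Q (t+1) > ε t; derive contradiction
    obtain ⟨K, hK⟩ : ∃ K : ℕ, K = ⌊ε * (t:ℝ) / (2 * D)⌋₊ := ⟨_, rfl⟩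
    have htpos : (0:ℝ) < t := by exact_mod_cast ht1
    have hKle : (K : ℝ) ≤ ε * t / (2 * D) := hK ▸ Nat.floor_le (by positivity)
    have hKgt : ε * t / (2 * D) < K + 1 := hK ▸ Nat.lt_floor_add_one _
    obtain ⟨s, hs⟩ : ∃ s : ℕ, s = t + 1 + K := ⟨_, rfl⟩
    -- each Q (t+1+k) for k ≤ K is at least ε t / 2
    have hlow : ∀ k : ℕ, k ≤ K → ε * t / 2 ≤ Q (t + 1 + k) := by
      intro k hk
      have h1 := hdec (t+1) (by omega) k
      have h2 : D * (k:ℝ) ≤ ε * t / 2 := by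
        have : (k:ℝ) ≤ ε * t / (2 * D) := le_trans (by exact_mod_cast hk) hKle
        calc D * (k:ℝ) ≤ D * (ε * t / (2 * D)) := by
              apply mul_le_mul_of_nonneg_left this hDpos.le
          _ = ε * t / 2 := by field_simp
      linarith only [h1, h2, hcon]
    -- sum lower bound
    have hsub : Finset.Icc (t+1) s ⊆ Finset.Icc 1 s := by
      intro x hx
      rw [Finset.mem_Icc] at *
      omega
    have hcard : (Finset.Icc (t+1) s).card = K + 1 := by
      rw [Nat.card_Icc]; omega
    have hsum1 : (K + 1 : ℝ) * (ε * t / 2) ≤ ∑ τ ∈ Finset.Icc (t+1) s, Q τ := by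
      have := Finset.card_nsmul_le_sum (Finset.Icc (t+1) s) Q (ε * t / 2)
        (fun i hi => by
          rw [Finset.mem_Icc, hs] at hi
          have : i = t + 1 + (i - (t+1)) := by omega
          rw [this]
          exact hlow _ (by omega))
      rw [hcard] at this
      simpa [nsmul_eq_mul] using this
    have hsum2 : ∑ τ ∈ Finset.Icc (t+1) s, Q τ ≤ ∑ τ ∈ Finset.Icc 1 s, Q τ :=
      Finset.sum_le_sum_of_subset_of_nonneg hsub
        (fun i hi _ => hQnn i (Finset.mem_Icc.mp hi).1)
    have hspos : (0:ℝ) < s := by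
      have h1 : 1 ≤ s := by omega
      exact_mod_cast h1
    have havg := hT₀ s (by omega)
    -- from avg bound: ΣQ ≤ M * s
    have hSQ : ∑ τ ∈ Finset.Icc 1 s, Q τ ≤ M * s := by
      have := havg
      rw [div_mul_eq_mul_div, one_mul, div_le_iff₀ hspos] at this
      linarith
    -- s ≤ B * t
    have hsB : (s:ℝ) ≤ B * t := by
      have hsc : (s:ℝ) = t + 1 + K := by push_cast [hs]; ring
      rw [hsc, hB]
      have h1 : (1:ℝ) ≤ t := by exact_mod_cast ht1
      have h2 : (K:ℝ) ≤ ε / (2*D) * t := by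
        calc (K:ℝ) ≤ ε * t / (2 * D) := hKle
          _ = ε / (2*D) * t := by ring
      nlinarith
    -- (K+1) * (εt/2) > ε²t²/(4D)
    have hKb : ε ^ 2 * t ^ 2 / (4 * D) < (K + 1 : ℝ) * (ε * t / 2) := by
      have h1 : ε * t / (2 * D) * (ε * t / 2) < (K + 1 : ℝ) * (ε * t / 2) := by
        apply mul_lt_mul_of_pos_right hKgt (by positivity)
      calc ε ^ 2 * t ^ 2 / (4 * D) = ε * t / (2 * D) * (ε * t / 2) := by
            field_simp; ring
        _ < _ := h1
    -- combine
    have hchain : ε ^ 2 * t ^ 2 / (4 * D) < M * (B * t) := by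
      have h3 : M * (s:ℝ) ≤ M * (B * t) := mul_le_mul_of_nonneg_left hsB hM0
      linarith only [hKb, hsum1, hsum2, hSQ, h3]
    -- contradiction with t > 4 D M B / ε²
    have hBpos : 0 < B := by rw [hB]; positivity
    have htbig : 4 * D * M * B / (ε ^ 2) < (t:ℝ) := lt_of_lt_of_le hT₁ (by exact_mod_cast htT₁)
    have htbig' : 4 * D * M * B < ε ^ 2 * t := by
      rw [div_lt_iff₀ (by positivity)] at htbig
      linarith only [htbig]
    have hchain' : ε ^ 2 * t ^ 2 < M * (B * t) * (4 * D) := by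
      rw [div_lt_iff₀ (by positivity)] at hchain
      linarith only [hchain]
    nlinarith [hchain', htbig', htpos]
  -- cobounded below
  have hcb : IsCoboundedUnder (· ≤ ·) atTop
      (fun t : ℕ => (1 / (t : ℝ)) * ∑ τ ∈ Finset.Icc 1 t, (a τ - b τ)) := by
    apply Filter.isCoboundedUnder_le_of_eventually_le atTop (x := -C)
    filter_upwards [eventually_ge_atTop 1] with t ht
    have htpos : (0:ℝ) < t := by exact_mod_cast ht
    have h1 : (-C) * t ≤ ∑ τ ∈ Finset.Icc 1 t, (a τ - b τ) := by
      have h2 := Finset.card_nsmul_le_sum (Finset.Icc 1 t) (fun τ => a τ - b τ) (-C)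
        (fun i _ => by show -C ≤ a i - b i; have := ha i; have := hbC i; linarith)
      rw [Nat.card_Icc, nsmul_eq_mul] at h2
      have hc : (t + 1 - 1 : ℕ) = t := by omega
      rw [hc] at h2
      linarith only [h2]
    calc -C = (1 / (t:ℝ)) * ((-C) * t) := by field_simp
      _ ≤ _ := by
          apply mul_le_mul_of_nonneg_left h1 (by positivity)
  -- conclude
  refine le_of_forall_pos_le_add fun ε hε => ?_
  rw [zero_add]
  apply Filter.limsup_le_of_le hcb
  filter_upwards [key ε hε, eventually_ge_atTop 1] with t hQt ht1
  have htpos : (0:ℝ) < t := by exact_mod_cast ht1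
  have h1 : ∑ τ ∈ Finset.Icc 1 t, (a τ - b τ) ≤ ε * t := le_trans (hsum t ht1) hQt
  calc (1 / (t:ℝ)) * ∑ τ ∈ Finset.Icc 1 t, (a τ - b τ) ≤ (1 / (t:ℝ)) * (ε * t) :=
        mul_le_mul_of_nonneg_left h1 (by positivity)
    _ = ε := by field_simp
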